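/- A vector x ∈ ℝᵏ is majorized by y ∈ ℝᵏ if and only if x lies in the convex hull of the set of all vectors obtained by permuting the coordinates of y. -/
import Mathlib

open Matrix

/-- The entries of `x` rearranged in decreasing order. -/
noncomputable def sortDesc {k : ℕ} (x : Fin k → ℝ) : Fin k → ℝ :=
  fun i => x (Tuple.sort x i.rev)

/-- `IsMajorizedBy x y` (usually written `x ≺ y`) means: for every `l ≤ k` the sum of
the `l` largest entries of `x` is at most that of `y`, with equality of total sums. -/
def IsMajorizedBy {k : ℕ} (x y : Fin k → ℝ) : Prop :=
  (∀ l : ℕ, l ≤ k →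
      ∑ i ∈ Finset.univ.filter (fun i : Fin k => (i : ℕ) < l), sortDesc x i ≤
      ∑ i ∈ Finset.univ.filter (fun i : Fin k => (i : ℕ) < l), sortDesc y i) ∧
  ∑ i, x i = ∑ i, y i

namespace RadoAux

open Finset

variable {k : ℕ}

/-- prefix sums -/
def psum (l : ℕ) (x : Fin k → ℝ) : ℝ :=
  ∑ i ∈ Finset.univ.filter (fun i : Fin k => (i : ℕ) < l), x i

lemma psum_def (l : ℕ) (x : Fin k → ℝ) :
    psum l x = ∑ i ∈ Finset.univ.filter (fun i : Fin k => (i : ℕ) < l), x i := rfl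

lemma filt_succ (l : ℕ) (hl : l < k) :
    Finset.univ.filter (fun i : Fin k => (i : ℕ) < l + 1) =
      insert ⟨l, hl⟩ (Finset.univ.filter (fun i : Fin k => (i : ℕ) < l)) := by
  ext i
  simp only [mem_filter, mem_univ, true_and, mem_insert, Fin.ext_iff]
  omega

lemma psum_succ (l : ℕ) (hl : l < k) (x : Fin k → ℝ) :
    psum (l + 1) x = psum l x + x ⟨l, hl⟩ := by
  rw [psum, psum, filt_succ l hl, sum_insert (by simp)]
  ring

lemma psum_univ (x : Fin k → ℝ) : psum k x = ∑ i, x i := by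
  rw [psum, filter_true_of_mem (fun i _ => i.isLt)]

lemma card_filt (l : ℕ) (hl : l ≤ k) :
    (Finset.univ.filter (fun i : Fin k => (i : ℕ) < l)).card = l := by
  induction l with
  | zero => simp
  | succ n ih =>
    rw [filt_succ n (by omega), card_insert_of_notMem (by simp), ih (by omega)]

lemma psum_eq_sum_fin (l : ℕ) (hl : l ≤ k) (x : Fin k → ℝ) :
    psum l x = ∑ j : Fin l, x (Fin.castLE hl j) := by
  have himg : Finset.univ.filter (fun i : Fin k => (i : ℕ) < l) =
      (Finset.univ : Finset (Fin l)).image (Fin.castLE hl) := by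
    ext i
    simp only [mem_filter, mem_univ, true_and, mem_image]
    constructor
    · intro h; exact ⟨⟨(i : ℕ), h⟩, rfl⟩
    · rintro ⟨j, -, rfl⟩; exact j.isLt
  rw [psum, himg, sum_image (fun a _ b _ h => Fin.castLE_injective hl h)]

lemma coe_le_strictMono {l : ℕ} {f : Fin l → Fin k} (hf : StrictMono f) (j : Fin l) :
    (j : ℕ) ≤ (f j : ℕ) := by
  obtain ⟨n, hn⟩ := j
  induction n with
  | zero => exact Nat.zero_le _
  | succ m ih =>
    have h1 : (m : ℕ) ≤ (f ⟨m, by omega⟩ : ℕ) := ih (by omega)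
    have h2 : f ⟨m, by omega⟩ < f ⟨m + 1, hn⟩ := hf (by simp [Fin.lt_def])
    simp only [Fin.lt_def] at h2
    show m + 1 ≤ (f ⟨m + 1, hn⟩ : ℕ)
    omega

/-- sum over any subset of an antitone function is at most the corresponding prefix sum -/
lemma sum_le_psum_of_antitone {g : Fin k → ℝ} (hg : Antitone g) (T : Finset (Fin k)) :
    ∑ m ∈ T, g m ≤ psum T.card g := by
  have hl : T.card ≤ k := by
    simpa using card_le_card (subset_univ T)
  set l := T.card with hlc
  let e : Fin l ↪o Fin k := T.orderEmbOfFin hlc.symm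
  have hT : T = (Finset.univ : Finset (Fin l)).image e := by
    ext i
    simp only [mem_image, mem_univ, true_and]
    constructor
    · intro hi
      have : i ∈ Set.range e := by
        rw [Finset.range_orderEmbOfFin]; exact hi
      obtain ⟨j, hj⟩ := this
      exact ⟨j, hj⟩
    · rintro ⟨j, rfl⟩
      exact Finset.orderEmbOfFin_mem _ _ _
  rw [hT, sum_image (fun a _ b _ h => e.injective h), psum_eq_sum_fin l hl]
  refine Finset.sum_le_sum fun j _ => hg ?_
  rw [Fin.le_def]
  exact coe_le_strictMono e.strictMono j

noncomputable def dperm (x : Fin k → ℝ) : Equiv.Perm (Fin k) :=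
  (Fin.revPerm).trans (Tuple.sort x)

lemma sortDesc_eq (x : Fin k → ℝ) : sortDesc x = x ∘ (dperm x) := rfl

lemma antitone_sortDesc (x : Fin k → ℝ) : Antitone (sortDesc x) := by
  intro a b hab
  exact Tuple.monotone_sort x (show b.rev ≤ a.rev by rwa [Fin.rev_le_rev])

lemma sum_sortDesc (x : Fin k → ℝ) : ∑ i, sortDesc x i = ∑ i, x i := by
  rw [sortDesc_eq]
  exact Equiv.sum_comp (dperm x) x

/-- sum of the `l` largest entries -/
noncomputable def topSum (l : ℕ) (x : Fin k → ℝ) : ℝ := psum l (sortDesc x)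

lemma sum_le_topSum (x : Fin k → ℝ) (S : Finset (Fin k)) :
    ∑ m ∈ S, x m ≤ topSum S.card x := by
  have hx : ∀ m, x m = sortDesc x ((dperm x).symm m) := by
    intro m; rw [sortDesc_eq]; simp
  calc ∑ m ∈ S, x m = ∑ m ∈ S, sortDesc x ((dperm x).symm m) :=
        Finset.sum_congr rfl fun m _ => hx m
    _ = ∑ m ∈ S.image (dperm x).symm, sortDesc x m := by
        rw [sum_image (fun a _ b _ h => (dperm x).symm.injective h)]
    _ ≤ psum (S.image (dperm x).symm).card (sortDesc x) :=
        sum_le_psum_of_antitone (antitone_sortDesc x) _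
    _ = topSum S.card x := by
        rw [topSum, card_image_of_injective _ (dperm x).symm.injective]

lemma exists_topSum (x : Fin k → ℝ) (l : ℕ) (hl : l ≤ k) :
    ∃ S : Finset (Fin k), S.card = l ∧ topSum l x = ∑ m ∈ S, x m := by
  refine ⟨(Finset.univ.filter (fun i : Fin k => (i : ℕ) < l)).image (dperm x), ?_, ?_⟩
  · rw [card_image_of_injective _ (dperm x).injective, card_filt l hl]
  · rw [sum_image (fun a _ b _ h => (dperm x).injective h), topSum, psum, sortDesc_eq]
    rfl

lemma topSum_comp_perm_le (y : Fin k → ℝ) (σ : Equiv.Perm (Fin k)) (l : ℕ) (hl : l ≤ k) :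
    topSum l (y ∘ σ) ≤ topSum l y := by
  obtain ⟨S, hS, hEq⟩ := exists_topSum (y ∘ σ) l hl
  rw [hEq]
  calc ∑ m ∈ S, (y ∘ σ) m = ∑ m ∈ S.image σ, y m := by
        rw [sum_image (fun a _ b _ h => σ.injective h)]; rfl
    _ ≤ topSum (S.image σ).card y := sum_le_topSum y _
    _ = topSum l y := by rw [card_image_of_injective _ σ.injective, hS]

lemma topSum_comp_perm (y : Fin k → ℝ) (σ : Equiv.Perm (Fin k)) (l : ℕ) (hl : l ≤ k) :
    topSum l (y ∘ σ) = topSum l y := by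
  refine le_antisymm (topSum_comp_perm_le y σ l hl) ?_
  have h := topSum_comp_perm_le (y ∘ σ) σ⁻¹ l hl
  have he : (y ∘ σ) ∘ ⇑σ⁻¹ = y := by
    funext m; simp
  rwa [he] at h

/-- The key induction: transferring mass between two coordinates. -/
lemma core (d : ℕ) : ∀ (x y : Fin k → ℝ), Antitone x → Antitone y →
    (∀ l, l ≤ k → psum l x ≤ psum l y) → (∑ m, x m = ∑ m, y m) →
    (Finset.univ.filter fun m => x m ≠ y m).card ≤ d →
    x ∈ convexHull ℝ {v : Fin k → ℝ | ∃ σ : Equiv.Perm (Fin k), v = y ∘ σ} := by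
  induction d with
  | zero =>
    intro x y _ _ _ _ hcard
    have he := Finset.card_eq_zero.mp (Nat.le_zero.mp hcard)
    rw [Finset.filter_eq_empty_iff] at he
    have hxy : x = y := by
      funext m
      have := he (mem_univ m)
      simpa [not_not] using this
    subst hxy
    exact subset_convexHull ℝ _ ⟨Equiv.refl _, rfl⟩
  | succ d ih =>
    intro x y hx hy hpre hsum hcard
    by_cases hxy : x = y
    · subst hxy
      exact subset_convexHull ℝ _ ⟨Equiv.refl _, rfl⟩
    have hle_ne : ∃ m, y m < x m := by
      by_contra hc
      push_neg at hc
      apply hxy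
      funext m
      by_contra hm
      have hlt : x m < y m := lt_of_le_of_ne (hc m) hm
      have : ∑ m, x m < ∑ m, y m :=
        Finset.sum_lt_sum (fun m _ => hc m) ⟨m, mem_univ m, hlt⟩
      linarith
    set J : Finset (Fin k) := Finset.univ.filter (fun m => y m < x m) with hJdef
    have hJ : J.Nonempty := by
      obtain ⟨m, hm⟩ := hle_ne; exact ⟨m, by simp [hJdef, hm]⟩
    set j : Fin k := J.min' hJ with hjdef
    have hyjxj : y j < x j := by
      have := J.min'_mem hJ; simp only [hJdef, mem_filter, mem_univ, true_and] at this
      exact this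
    have hminj : ∀ m : Fin k, m < j → x m ≤ y m := by
      intro m hm
      by_contra hmm
      push_neg at hmm
      have : j ≤ m := J.min'_le m (by simp [hJdef, hmm])
      exact absurd hm (not_lt.mpr this)
    set I : Finset (Fin k) := Finset.univ.filter (fun m => m < j ∧ x m < y m) with hIdef
    have hI : I.Nonempty := by
      by_contra hIe
      rw [Finset.not_nonempty_iff_eq_empty, Finset.filter_eq_empty_iff] at hIe
      have heqb : ∀ m : Fin k, m < j → x m = y m := by
        intro m hm
        rcases lt_or_eq_of_le (hminj m hm) with h | h
        · exact absurd (⟨hm, h⟩ : m < j ∧ x m < y m) (hIe (mem_univ m))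
        · exact h
      have hjk : (j : ℕ) < k := j.isLt
      have h1 : psum (j : ℕ) x = psum (j : ℕ) y := by
        refine Finset.sum_congr rfl fun m hm => ?_
        simp only [mem_filter, mem_univ, true_and] at hm
        exact heqb m (by rwa [Fin.lt_def])
      have h2 := hpre ((j : ℕ) + 1) hjk
      rw [psum_succ _ hjk, psum_succ _ hjk] at h2
      simp only [Fin.eta] at h2
      linarith
    set i : Fin k := I.max' hI with hidef
    have hiI : i < j ∧ x i < y i := by
      have := I.max'_mem hI; simp only [hIdef, mem_filter, mem_univ, true_and] at this
      exact this
    obtain ⟨hij, hxiyi⟩ := hiI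
    have hmid : ∀ m : Fin k, i < m → m < j → x m = y m := by
      intro m h1 h2
      rcases lt_or_eq_of_le (hminj m h2) with h | h
      · have : m ≤ i := I.le_max' m (by
          simp only [hIdef, mem_filter, mem_univ, true_and]; exact ⟨h2, h⟩)
        exact absurd h1 (not_lt.mpr this)
      · exact h
    have hxji : x j ≤ x i := hx hij.le
    have hji : y j < y i := by linarith
    set δ : ℝ := min (y i - x i) (x j - y j) with hddef
    have hδpos : 0 < δ := lt_min (by linarith) (by linarith)
    have hδ1 : δ ≤ y i - x i := min_le_left _ _
    have hδ2 : δ ≤ x j - y j := min_le_right _ _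
    have hne : i ≠ j := hij.ne
    set y' : Fin k → ℝ :=
      fun m => if m = i then y i - δ else if m = j then y j + δ else y m with hy'def
    have hy'i : y' i = y i - δ := by simp [hy'def]
    have hy'j : y' j = y j + δ := by simp [hy'def, hne.symm]
    have hy'o : ∀ m, m ≠ i → m ≠ j → y' m = y m := by
      intro m h1 h2; simp [hy'def, h1, h2]
    have hy' : Antitone y' := by
      intro a b hab
      rcases eq_or_lt_of_le hab with rfl | hab'
      · exact le_refl _
      rcases eq_or_ne a i with rfl | hai
      · rcases eq_or_ne b j with rfl | hbj
        · rw [hy'i, hy'j]; linarith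
        · have hbi : b ≠ i := hab'.ne'
          rw [hy'o b hbi hbj, hy'i]
          rcases lt_or_gt_of_ne hbj with hbj' | hbj'
          · have hb1 := hmid b hab' hbj'
            have hb2 := hx hab'.le
            linarith
          · have hb3 := hy hbj'.le
            linarith
      rcases eq_or_ne a j with rfl | haj
      · have hbj : b ≠ j := hab'.ne'
        have hbi : b ≠ i := (hij.trans hab').ne'
        rw [hy'o b hbi hbj, hy'j]
        have := hy hab'.le
        linarith
      rw [hy'o a hai haj]
      rcases eq_or_ne b i with rfl | hbi
      · rw [hy'i]
        have := hy hab'.le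
        linarith
      rcases eq_or_ne b j with rfl | hbj
      · rw [hy'j]
        rcases lt_or_gt_of_ne hai with hai' | hai'
        · have := hy hai'.le
          linarith
        · have heqa := hmid a hai' hab'
          have := hx hab'.le
          linarith
      · rw [hy'o b hbi hbj]
        exact hy hab
    have hsplit : ∀ l : ℕ, psum l y' = psum l y
        + ((if (i : ℕ) < l then -δ else 0) + (if (j : ℕ) < l then δ else 0)) := by
      intro l
      have hpt : ∀ m : Fin k,
          y' m = y m + ((if m = i then -δ else 0) + (if m = j then δ else 0)) := by
        intro m
        rcases eq_or_ne m i with rfl | h1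
        · rw [hy'i, if_pos rfl, if_neg hne]; ring
        rcases eq_or_ne m j with rfl | h2
        · rw [hy'j, if_neg h1, if_pos rfl]; ring
        · rw [hy'o m h1 h2, if_neg h1, if_neg h2]; ring
      have h1 : psum l y' = ∑ m ∈ Finset.univ.filter (fun m : Fin k => (m : ℕ) < l),
          (y m + ((if m = i then -δ else 0) + (if m = j then δ else 0))) :=
        Finset.sum_congr rfl fun m _ => hpt m
      rw [psum_def, psum_def] at *
      rw [h1, Finset.sum_add_distrib, Finset.sum_add_distrib,
        Finset.sum_ite_eq' _ i (fun _ => -δ), Finset.sum_ite_eq' _ j (fun _ => δ)]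
      simp only [mem_filter, mem_univ, true_and]
    have hijn : (i : ℕ) < (j : ℕ) := hij
    have hstep : ∀ l : ℕ, (i : ℕ) < l → l ≤ (j : ℕ) → δ ≤ psum l y - psum l x := by
      intro l hil hlj
      have hik : (i : ℕ) < k := i.isLt
      have hbase : δ ≤ psum ((i : ℕ) + 1) y - psum ((i : ℕ) + 1) x := by
        have h0 := hpre (i : ℕ) (le_of_lt hik)
        rw [psum_succ _ hik, psum_succ _ hik]
        simp only [Fin.eta]
        linarith
      have hind : ∀ n : ℕ, (i : ℕ) + 1 ≤ n → n ≤ (j : ℕ) →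
          psum n y - psum n x = psum ((i : ℕ) + 1) y - psum ((i : ℕ) + 1) x := by
        intro n
        induction n with
        | zero => omega
        | succ m ihm =>
          intro h1 h2
          rcases Nat.lt_or_ge ((i : ℕ) + 1) (m + 1) with hlt | hge
          · have hm1 : (i : ℕ) + 1 ≤ m := by omega
            have hmj : m ≤ (j : ℕ) := by omega
            have hmk : m < k := lt_trans (show m < (j : ℕ) by omega) j.isLt
            have heqm : x ⟨m, hmk⟩ = y ⟨m, hmk⟩ := by
              refine hmid ⟨m, hmk⟩ ?_ ?_
              · rw [Fin.lt_def]; exact (by omega : (i : ℕ) < m)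
              · rw [Fin.lt_def]; exact (by omega : m < (j : ℕ))
            rw [psum_succ m hmk, psum_succ m hmk, heqm]
            have := ihm hm1 hmj
            linarith
          · have hmi : m + 1 = (i : ℕ) + 1 := by omega
            rw [hmi]
      have h3 := hind l hil hlj
      linarith
    have hpre' : ∀ l, l ≤ k → psum l x ≤ psum l y' := by
      intro l hl
      rw [hsplit l]
      rcases Nat.lt_or_ge (i : ℕ) l with hil | hil
      · rcases Nat.lt_or_ge (j : ℕ) l with hjl | hjl
        · rw [if_pos hil, if_pos hjl]
          have := hpre l hl; linarith
        · rw [if_pos hil, if_neg (not_lt.mpr hjl)]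
          have := hstep l hil hjl; linarith
      · have hjl : ¬ (j : ℕ) < l := by omega
        rw [if_neg (not_lt.mpr hil), if_neg hjl]
        have := hpre l hl; linarith
    have hsum' : ∑ m, x m = ∑ m, y' m := by
      have h := hsplit k
      rw [psum_univ, psum_univ, if_pos i.isLt, if_pos j.isLt] at h
      linarith
    have hsub : (Finset.univ.filter fun m => x m ≠ y' m) ⊆
        (Finset.univ.filter fun m => x m ≠ y m) := by
      intro m hm
      simp only [mem_filter, mem_univ, true_and] at hm ⊢
      rcases eq_or_ne m i with rfl | h1
      · exact hxiyi.ne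
      rcases eq_or_ne m j with rfl | h2
      · exact hyjxj.ne'
      · rwa [hy'o m h1 h2] at hm
    have hwit : ∃ m, m ∈ (Finset.univ.filter fun m => x m ≠ y m) ∧
        m ∉ (Finset.univ.filter fun m => x m ≠ y' m) := by
      rcases le_total (y i - x i) (x j - y j) with h | h
      · refine ⟨i, by simp [hxiyi.ne], ?_⟩
        simp only [mem_filter, mem_univ, true_and, not_not]
        rw [hy'i, hddef, min_eq_left h]; ring
      · refine ⟨j, by simp [hyjxj.ne'], ?_⟩
        simp only [mem_filter, mem_univ, true_and, not_not]
        rw [hy'j, hddef, min_eq_right h]; ring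
    obtain ⟨m0, hm1, hm2⟩ := hwit
    have hcard' : (Finset.univ.filter fun m => x m ≠ y' m).card ≤ d := by
      have hss : (Finset.univ.filter fun m => x m ≠ y' m) ⊂
          (Finset.univ.filter fun m => x m ≠ y m) :=
        (Finset.ssubset_iff_of_subset hsub).mpr ⟨m0, hm1, hm2⟩
      have := Finset.card_lt_card hss
      omega
    have hmem := ih x y' hx hy' hpre' hsum' hcard'
    set lam : ℝ := δ / (y i - y j) with hlamdef
    have hd : (0 : ℝ) < y i - y j := by linarith
    have hlam0 : 0 ≤ lam := div_nonneg hδpos.le hd.le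
    have hlam1 : lam ≤ 1 := by
      rw [hlamdef, div_le_one hd]
      linarith
    have hcancel : lam * (y i - y j) = δ := div_mul_cancel₀ δ hd.ne'
    have hcomb : ∀ m, y' m = (1 - lam) * y m + lam * y (Equiv.swap i j m) := by
      intro m
      rcases eq_or_ne m i with rfl | h1
      · rw [hy'i, Equiv.swap_apply_left]
        linear_combination hcancel
      rcases eq_or_ne m j with rfl | h2
      · rw [hy'j, Equiv.swap_apply_right]
        linear_combination -hcancel
      · rw [hy'o m h1 h2, Equiv.swap_apply_of_ne_of_ne h1 h2]; ring
    have hsubset : {v : Fin k → ℝ | ∃ σ : Equiv.Perm (Fin k), v = y' ∘ σ} ⊆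
        convexHull ℝ {v : Fin k → ℝ | ∃ σ : Equiv.Perm (Fin k), v = y ∘ σ} := by
      rintro v ⟨σ, rfl⟩
      have h1 : (y ∘ ⇑σ) ∈ {v : Fin k → ℝ | ∃ τ : Equiv.Perm (Fin k), v = y ∘ τ} := ⟨σ, rfl⟩
      have h2 : (y ∘ ⇑(σ.trans (Equiv.swap i j))) ∈
          {v : Fin k → ℝ | ∃ τ : Equiv.Perm (Fin k), v = y ∘ τ} :=
        ⟨σ.trans (Equiv.swap i j), rfl⟩
      have heq : y' ∘ ⇑σ = (1 - lam) • (y ∘ ⇑σ) + lam • (y ∘ ⇑(σ.trans (Equiv.swap i j))) := by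
        funext m
        simp only [Function.comp_apply, Pi.add_apply, Pi.smul_apply, smul_eq_mul,
          Equiv.trans_apply]
        exact hcomb (σ m)
      rw [heq]
      exact (convex_convexHull ℝ _) (subset_convexHull ℝ _ h1) (subset_convexHull ℝ _ h2)
        (by linarith) hlam0 (by ring)
    exact convexHull_min hsubset (convex_convexHull ℝ _) hmem

end RadoAux

open Finset in
/-- Rado's theorem: `x ≺ y` iff `x` lies in the convex hull of the permuted
versions of `y`. -/
theorem stmt13 {k : ℕ} (x y : Fin k → ℝ) :
    IsMajorizedBy x y ↔
      x ∈ convexHull ℝ {v : Fin k → ℝ | ∃ σ : Equiv.Perm (Fin k), v = y ∘ σ} := by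
  constructor
  · rintro ⟨h1, h2⟩
    have hxmem := RadoAux.core (k := k) k (sortDesc x) (sortDesc y)
      (RadoAux.antitone_sortDesc x) (RadoAux.antitone_sortDesc y)
      (fun l hl => h1 l hl)
      (by rw [RadoAux.sum_sortDesc, RadoAux.sum_sortDesc]; exact h2)
      ((Finset.card_filter_le _ _).trans (by simp))
    have hset : {v : Fin k → ℝ | ∃ σ : Equiv.Perm (Fin k), v = sortDesc y ∘ σ} =
        {v : Fin k → ℝ | ∃ σ : Equiv.Perm (Fin k), v = y ∘ σ} := by
      ext v
      constructor
      · rintro ⟨σ, rfl⟩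
        exact ⟨σ.trans (RadoAux.dperm y), by rw [RadoAux.sortDesc_eq]; rfl⟩
      · rintro ⟨σ, rfl⟩
        refine ⟨σ.trans (RadoAux.dperm y).symm, ?_⟩
        rw [RadoAux.sortDesc_eq]
        funext m
        simp [Equiv.trans_apply]
    rw [hset] at hxmem
    have hx' : x = sortDesc x ∘ ⇑(RadoAux.dperm x).symm := by
      rw [RadoAux.sortDesc_eq]; funext m; simp
    set L : (Fin k → ℝ) →ₗ[ℝ] (Fin k → ℝ) :=
      LinearMap.funLeft ℝ ℝ ⇑(RadoAux.dperm x).symm with hL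
    have himg : L '' {v : Fin k → ℝ | ∃ σ : Equiv.Perm (Fin k), v = y ∘ σ} =
        {v : Fin k → ℝ | ∃ σ : Equiv.Perm (Fin k), v = y ∘ σ} := by
      ext w
      simp only [Set.mem_image, Set.mem_setOf_eq]
      constructor
      · rintro ⟨v, ⟨σ, rfl⟩, rfl⟩
        exact ⟨(RadoAux.dperm x).symm.trans σ, rfl⟩
      · rintro ⟨σ, rfl⟩
        refine ⟨y ∘ ⇑((RadoAux.dperm x).trans σ), ⟨_, rfl⟩, ?_⟩
        funext m
        simp [hL, LinearMap.funLeft_apply, Equiv.trans_apply]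
    rw [← himg, ← L.image_convexHull]
    exact ⟨sortDesc x, hxmem, hx'.symm⟩
  · intro hmem
    have hsub : {v : Fin k → ℝ | ∃ σ : Equiv.Perm (Fin k), v = y ∘ σ} ⊆
        {v : Fin k → ℝ | IsMajorizedBy v y} := by
      rintro v ⟨σ, rfl⟩
      constructor
      · intro l hl
        exact le_of_eq (RadoAux.topSum_comp_perm y σ l hl)
      · exact Equiv.sum_comp σ y
    have hconv : Convex ℝ {v : Fin k → ℝ | IsMajorizedBy v y} := by
      intro u hu v hv a b ha hb hab
      constructor
      · intro l hl
        obtain ⟨S, hS, hEq⟩ := RadoAux.exists_topSum (a • u + b • v) l hl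
        have hu1 : ∑ m ∈ S, u m ≤ RadoAux.topSum l u := hS ▸ RadoAux.sum_le_topSum u S
        have hv1 : ∑ m ∈ S, v m ≤ RadoAux.topSum l v := hS ▸ RadoAux.sum_le_topSum v S
        have hu2 : RadoAux.topSum l u ≤ RadoAux.topSum l y := hu.1 l hl
        have hv2 : RadoAux.topSum l v ≤ RadoAux.topSum l y := hv.1 l hl
        have h5 : RadoAux.topSum l (a • u + b • v) =
            a * (∑ m ∈ S, u m) + b * (∑ m ∈ S, v m) := by
          rw [hEq]
          simp only [Pi.add_apply, Pi.smul_apply, smul_eq_mul]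
          rw [Finset.sum_add_distrib, Finset.mul_sum, Finset.mul_sum]
        show RadoAux.topSum l (a • u + b • v) ≤ RadoAux.topSum l y
        rw [h5]
        have := mul_le_mul_of_nonneg_left (hu1.trans hu2) ha
        have := mul_le_mul_of_nonneg_left (hv1.trans hv2) hb
        have h6 : a * RadoAux.topSum l y + b * RadoAux.topSum l y = RadoAux.topSum l y := by
          rw [← add_mul, hab, one_mul]
        linarith
      · show ∑ m, (a • u + b • v) m = ∑ m, y m
        simp only [Pi.add_apply, Pi.smul_apply, smul_eq_mul]
        rw [Finset.sum_add_distrib, ← Finset.mul_sum, ← Finset.mul_sum, hu.2, hv.2,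
          ← add_mul, hab, one_mul]
    exact convexHull_min hsub hconv hmem
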